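/- arXiv:2410.16988 — 3 statements merged into one kernel-verified Lean document; each statement's English description precedes it below -/
import Mathlib

section
/- Let F be a metrizable topological space with its Borel σ-algebra and let (S_t)_{t>0} be a family of Markov kernels on F that is strong Feller, i.e. for every t > 0 and every bounded Borel measurable g : F → ℝ the function x ↦ S_t g(x) := ∫ g(z) S_t(x,dz) is continuous on F. Let c, f : F → [0,∞) be bounded Borel measurable functions, and let k : [0,∞) × F → ℝ, (t,x) ↦ k_t(x), be a jointly measurable function with 0 ≤ k_t(x) ≤ sup f for all t, x, satisfying the Feynman–Kac integral equation k_t(x) = S_t f(x) − ∫₀ᵗ S_s(c · k_{t−s})(x) ds for every t ≥ 0 and x ∈ F (the map s ↦ S_s(c · k_{t−s})(x) being integrable on [0,t] for each x). Then for every t > 0 the function x ↦ k_t(x) is continuous on F. (This is Lemma 2.1(i): the strong Feller property of a transition function is preserved by killing with the multiplicative functional induced by c.) -/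
open Filter Topology MeasureTheory ProbabilityTheory

/-- Lemma 2.1(i): the strong Feller property of a transition function is
preserved by killing. Let `(S_t)` be a family of Markov kernels on a metrizable space `F`
(with its Borel σ-algebra) which is strong Feller: `x ↦ S_t g(x) = ∫ g dS_t(x,·)` is
continuous for every `t > 0` and every bounded Borel measurable `g`. Let `c, f : F → [0,∞)`
be bounded Borel measurable, and let `k : [0,∞) × F → ℝ` be jointly measurable with
`0 ≤ k_t(x) ≤ sup f`, satisfying the Feynman–Kac integral equation
`k_t(x) = S_t f(x) − ∫₀ᵗ S_s(c · k_{t−s})(x) ds` for all `t ≥ 0`, `x ∈ F` (the integrand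
being integrable on `[0,t]`). Then `k_t` is continuous on `F` for every `t > 0`. -/
theorem strongFeller_preserved_by_killing
    {F : Type*} [TopologicalSpace F] [TopologicalSpace.MetrizableSpace F]
    [MeasurableSpace F] [BorelSpace F]
    (S : ℝ → Kernel F F)
    (hMarkov : ∀ t : ℝ, 0 ≤ t → IsMarkovKernel (S t))
    (hSF : ∀ t : ℝ, 0 < t → ∀ g : F → ℝ, Measurable g → (∃ M, ∀ x, |g x| ≤ M) →
      Continuous fun x => ∫ z, g z ∂(S t x))
    (c : F → ℝ) (hcmeas : Measurable c) (hc0 : ∀ x, 0 ≤ c x) (hcbdd : ∃ M, ∀ x, c x ≤ M)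
    (f : F → ℝ) (hfmeas : Measurable f) (hf0 : ∀ x, 0 ≤ f x)
    (hfbdd : BddAbove (Set.range f))
    (k : ℝ → F → ℝ)
    (hkmeas : Measurable fun p : ℝ × F => k p.1 p.2)
    (hk0 : ∀ t x, 0 ≤ k t x) (hkle : ∀ t x, k t x ≤ sSup (Set.range f))
    (hint : ∀ t : ℝ, 0 ≤ t → ∀ x : F,
      IntervalIntegrable (fun s => ∫ z, c z * k (t - s) z ∂(S s x)) volume 0 t)
    (heq : ∀ t : ℝ, 0 ≤ t → ∀ x : F,
      k t x = (∫ z, f z ∂(S t x)) - ∫ s in (0 : ℝ)..t, ∫ z, c z * k (t - s) z ∂(S s x)) :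
    ∀ t : ℝ, 0 < t → Continuous (k t) := by
  obtain ⟨Mc, hMc⟩ := hcbdd
  intro t ht
  have htle : (0:ℝ) ≤ t := ht.le
  have hk : k t = fun x => (∫ z, f z ∂(S t x)) -
      ∫ s in (0:ℝ)..t, ∫ z, c z * k (t - s) z ∂(S s x) :=
    funext fun x => heq t htle x
  rw [hk]
  apply Continuous.sub
  · exact hSF t ht f hfmeas ⟨sSup (Set.range f), fun x => by
      rw [abs_of_nonneg (hf0 x)]; exact le_csSup hfbdd ⟨x, rfl⟩⟩
  · have hseq : SeqContinuous
        (fun x => ∫ s in (0:ℝ)..t, ∫ z, c z * k (t - s) z ∂(S s x)) := by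
      intro u x hux
      have hMf0 : (0:ℝ) ≤ sSup (Set.range f) := le_trans (hf0 x) (le_csSup hfbdd ⟨x, rfl⟩)
      have hMc0 : (0:ℝ) ≤ Mc := le_trans (hc0 x) (hMc x)
      have huIoc : Set.uIoc (0:ℝ) t = Set.Ioc 0 t := Set.uIoc_of_le htle
      have hbd : ∀ (y : F) (s : ℝ), s ∈ Set.Ioc (0:ℝ) t →
          ‖∫ z, c z * k (t - s) z ∂(S s y)‖ ≤ Mc * sSup (Set.range f) := by
        intro y s hs
        have := hMarkov s hs.1.le
        have h1 : ∀ᵐ z ∂(S s y), ‖c z * k (t - s) z‖ ≤ Mc * sSup (Set.range f) := by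
          filter_upwards with z
          rw [norm_mul, Real.norm_of_nonneg (hc0 z), Real.norm_of_nonneg (hk0 _ z)]
          exact mul_le_mul (hMc z) (hkle _ z) (hk0 _ z) hMc0
        calc ‖∫ z, c z * k (t - s) z ∂(S s y)‖
            ≤ Mc * sSup (Set.range f) * ((S s y) Set.univ).toReal :=
              norm_integral_le_of_norm_le_const h1
          _ = Mc * sSup (Set.range f) := by simp
      apply intervalIntegral.tendsto_integral_filter_of_dominated_convergence
        (fun _ => Mc * sSup (Set.range f))
      · filter_upwards with n
        rw [huIoc]
        exact (hint t htle (u n)).1.aestronglyMeasurable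
      · filter_upwards with n
        exact Filter.Eventually.of_forall fun s hs => hbd (u n) s (huIoc ▸ hs)
      · exact intervalIntegrable_const
      · refine Filter.Eventually.of_forall fun s hs => ?_
        rw [huIoc] at hs
        have hgmeas : Measurable fun z => c z * k (t - s) z :=
          hcmeas.mul (hkmeas.comp (measurable_const.prodMk measurable_id))
        have hgbdd : ∃ M, ∀ z, |c z * k (t - s) z| ≤ M := by
          refine ⟨Mc * sSup (Set.range f), fun z => ?_⟩
          rw [abs_mul, abs_of_nonneg (hc0 z), abs_of_nonneg (hk0 _ z)]
          exact mul_le_mul (hMc z) (hkle _ z) (hk0 _ z) hMc0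
        exact ((hSF s hs.1 _ hgmeas hgbdd).tendsto x).comp hux
    exact hseq.continuous
end

section
/- Let F be a locally compact Hausdorff topological space with a countable base, equipped with its Borel σ-algebra, and let (S_t)_{t>0} be a family of Markov kernels on F that is strong Feller, i.e. for every t > 0 and every bounded Borel measurable g : F → ℝ the function x ↦ S_t g(x) := ∫ g(z) S_t(x,dz) is continuous on F. Assume in addition that (S_t)_{t>0} acts on continuous functions vanishing at infinity: for every t > 0, if g : F → ℝ is continuous and vanishes at infinity then so does S_t g. Let c : F → [0,∞) be bounded Borel measurable, let f : F → [0,∞) be continuous, bounded and vanishing at infinity, and let k : [0,∞) × F → ℝ be jointly measurable with 0 ≤ k_t(x) ≤ sup f, satisfying k_t(x) = S_t f(x) − ∫₀ᵗ S_s(c · k_{t−s})(x) ds for all t ≥ 0, x ∈ F (the map s ↦ S_s(c · k_{t−s})(x) being integrable on [0,t] for each x). Then for every t > 0 the function k_t is continuous on F and vanishes at infinity, i.e. k_t(x) → 0 along the cocompact filter on F. (This is Lemma 2.1(ii).) -/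
open Filter Topology MeasureTheory ProbabilityTheory

/-- Lemma 2.1(ii): on a locally compact Hausdorff space `F` with countable
base, if the strong Feller family of Markov kernels `(S_t)_{t>0}` moreover acts on
continuous functions vanishing at infinity (i.e. maps them to functions vanishing at
infinity), `c : F → [0,∞)` is bounded Borel measurable, `f : F → [0,∞)` is continuous,
bounded and vanishes at infinity, and `k` is the (jointly measurable, `0 ≤ k ≤ sup f`)
solution of the killed Feynman–Kac integral equation
`k_t(x) = S_t f(x) − ∫₀ᵗ S_s(c · k_{t−s})(x) ds`, then for every `t > 0` the function `k_t`
is continuous and vanishes at infinity (tends to `0` along the cocompact filter). -/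
theorem strongFeller_C0_preserved_by_killing
    {F : Type*} [TopologicalSpace F] [T2Space F] [LocallyCompactSpace F]
    [SecondCountableTopology F]
    [MeasurableSpace F] [BorelSpace F]
    (S : ℝ → Kernel F F)
    (hMarkov : ∀ t : ℝ, 0 ≤ t → IsMarkovKernel (S t))
    (hSF : ∀ t : ℝ, 0 < t → ∀ g : F → ℝ, Measurable g → (∃ M, ∀ x, |g x| ≤ M) →
      Continuous fun x => ∫ z, g z ∂(S t x))
    (hC0 : ∀ t : ℝ, 0 < t → ∀ g : F → ℝ, Continuous g →
      Tendsto g (cocompact F) (𝓝 0) →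
      Tendsto (fun x => ∫ z, g z ∂(S t x)) (cocompact F) (𝓝 0))
    (c : F → ℝ) (hcmeas : Measurable c) (hc0 : ∀ x, 0 ≤ c x) (hcbdd : ∃ M, ∀ x, c x ≤ M)
    (f : F → ℝ) (hfcont : Continuous f) (hf0 : ∀ x, 0 ≤ f x)
    (hfbdd : BddAbove (Set.range f))
    (hfC0 : Tendsto f (cocompact F) (𝓝 0))
    (k : ℝ → F → ℝ)
    (hkmeas : Measurable fun p : ℝ × F => k p.1 p.2)
    (hk0 : ∀ t x, 0 ≤ k t x) (hkle : ∀ t x, k t x ≤ sSup (Set.range f))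
    (hint : ∀ t : ℝ, 0 ≤ t → ∀ x : F,
      IntervalIntegrable (fun s => ∫ z, c z * k (t - s) z ∂(S s x)) volume 0 t)
    (heq : ∀ t : ℝ, 0 ≤ t → ∀ x : F,
      k t x = (∫ z, f z ∂(S t x)) - ∫ s in (0 : ℝ)..t, ∫ z, c z * k (t - s) z ∂(S s x)) :
    ∀ t : ℝ, 0 < t → Continuous (k t) ∧ Tendsto (k t) (cocompact F) (𝓝 0) := by

  intro t ht
  have htle : (0:ℝ) ≤ t := ht.le
  obtain ⟨M, hM⟩ := hcbdd
  set Mf := sSup (Set.range f) with hMfdef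
  have hbdd : ∀ u z, |c z * k u z| ≤ M * Mf := by
    intro u z
    have h1 : 0 ≤ c z := hc0 z
    have h2 : 0 ≤ k u z := hk0 u z
    have h3 : k u z ≤ Mf := hkle u z
    rw [abs_of_nonneg (mul_nonneg h1 h2)]
    exact mul_le_mul (hM z) h3 h2 (h1.trans (hM z))
  have hfb : ∀ x, |f x| ≤ Mf := fun x => by
    rw [abs_of_nonneg (hf0 x)]; exact le_csSup hfbdd ⟨x, rfl⟩
  have hkm : ∀ u, Measurable fun z => k u z := fun u =>
    hkmeas.comp measurable_prodMk_left
  have hSf_cont : Continuous fun x => ∫ z, f z ∂(S t x) :=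
    hSF t ht f hfcont.measurable ⟨Mf, hfb⟩
  have hGcont : Continuous fun x => ∫ s in (0:ℝ)..t, ∫ z, c z * k (t - s) z ∂(S s x) := by
    rw [continuous_iff_seqContinuous]
    intro xs x hx
    have heqint : ∀ y : F, (∫ s in (0:ℝ)..t, ∫ z, c z * k (t - s) z ∂(S s y))
        = ∫ s in Set.Ioc (0:ℝ) t, ∫ z, c z * k (t - s) z ∂(S s y) := fun y =>
      intervalIntegral.integral_of_le htle
    simp only [Function.comp_def, heqint]
    apply MeasureTheory.tendsto_integral_of_dominated_convergence (fun _ => M * Mf)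
    · intro n
      exact (hint t htle (xs n)).1.aestronglyMeasurable
    · exact integrable_const _
    · intro n
      filter_upwards [ae_restrict_mem measurableSet_Ioc] with s hs
      haveI := hMarkov s hs.1.le
      calc ‖∫ z, c z * k (t - s) z ∂(S s (xs n))‖
          ≤ (M * Mf) * ((S s (xs n)) Set.univ).toReal := by
            apply norm_integral_le_of_norm_le_const
            filter_upwards with z
            rw [Real.norm_eq_abs]
            exact hbdd (t - s) z
        _ = M * Mf := by simp
    · filter_upwards [ae_restrict_mem measurableSet_Ioc] with s hs
      have hcont : Continuous fun y => ∫ z, c z * k (t - s) z ∂(S s y) :=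
        hSF s hs.1 _ (hcmeas.mul (hkm (t - s))) ⟨M * Mf, hbdd (t - s)⟩
      exact (hcont.tendsto x).comp hx
  have hkt : k t = fun x => (∫ z, f z ∂(S t x))
      - ∫ s in (0:ℝ)..t, ∫ z, c z * k (t - s) z ∂(S s x) := funext fun x => heq t htle x
  refine ⟨by rw [hkt]; exact hSf_cont.sub hGcont, ?_⟩
  have hle : ∀ x, k t x ≤ ∫ z, f z ∂(S t x) := by
    intro x
    rw [heq t htle x]
    have hnn : 0 ≤ ∫ s in (0:ℝ)..t, ∫ z, c z * k (t - s) z ∂(S s x) :=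
      intervalIntegral.integral_nonneg htle fun s _ =>
        integral_nonneg fun z => mul_nonneg (hc0 z) (hk0 _ z)
    linarith
  exact tendsto_of_tendsto_of_tendsto_of_le_of_le tendsto_const_nhds
    (hC0 t ht f hfcont hfC0) (fun x => hk0 t x) hle
end

section
/- Let φ be a flow on a topological space F, let C ⊆ F be a closed set, let τ(x) := inf{t ≥ 0 : φ_t(x) ∈ C} ∈ [0,∞] be the first entry time of C, and define the stopped flow Φ_t(x) := φ_{t ∧ τ(x)}(x) (with t ∧ ∞ = t). Then Φ is again a flow in the algebraic sense: Φ_0(x) = x and Φ_{t+s}(x) = Φ_t(Φ_s(x)) for all s, t ≥ 0 and all x ∈ F. -/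
open Filter Topology

/-- The first entry time of a set `C` by a family of maps `φ` indexed by nonnegative times,
valued in `[0,∞]` (`∞` if the trajectory never meets `C`). -/
noncomputable def entryTime {F : Type*} (φ : NNReal → F → F) (C : Set F) (x : F) : ENNReal :=
  sInf {s : ENNReal | ∃ t : NNReal, s = (t : ENNReal) ∧ φ t x ∈ C}

/-- The flow `φ` stopped at the set `C`: `Φ_t(x) = φ_{t ∧ τ(x)}(x)`, where `τ` is the first
entry time of `C` and `t ∧ ∞ = t`. -/
noncomputable def stoppedFlow {F : Type*} (φ : NNReal → F → F) (C : Set F)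
    (t : NNReal) (x : F) : F :=
  φ (min (t : ENNReal) (entryTime φ C x)).toNNReal x

lemma entryTime_eq_image {F : Type*} (φ : NNReal → F → F) (C : Set F) (x : F) :
    entryTime φ C x = sInf ((↑) '' {t : NNReal | φ t x ∈ C}) := by
  unfold entryTime
  congr 1
  ext s
  constructor
  · rintro ⟨t, rfl, ht⟩; exact ⟨t, ht, rfl⟩
  · rintro ⟨t, ht, rfl⟩; exact ⟨t, rfl, ht⟩

lemma entryTime_le {F : Type*} {φ : NNReal → F → F} {C : Set F} {x : F} {t : NNReal}
    (h : φ t x ∈ C) : entryTime φ C x ≤ (t : ENNReal) :=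
  sInf_le ⟨t, rfl, h⟩

lemma entryTime_mem {F : Type*} [TopologicalSpace F] {φ : NNReal → F → F}
    (hφcont : Continuous fun p : NNReal × F => φ p.1 p.2)
    {C : Set F} (hC : IsClosed C) {x : F} (hfin : entryTime φ C x ≠ ⊤) :
    φ (entryTime φ C x).toNNReal x ∈ C := by
  set T : Set NNReal := {t : NNReal | φ t x ∈ C} with hT
  have hTclosed : IsClosed T := hC.preimage (hφcont.comp (Continuous.prodMk_left x))
  have hTne : T.Nonempty := by
    by_contra h
    rw [Set.not_nonempty_iff_eq_empty] at h
    rw [entryTime_eq_image, ← hT, h, Set.image_empty, sInf_empty] at hfin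
    exact hfin rfl
  have hmem : sInf T ∈ T := hTclosed.csInf_mem hTne (OrderBot.bddBelow T)
  have hco : entryTime φ C x = ((sInf T : NNReal) : ENNReal) := by
    rw [entryTime_eq_image, ← hT, sInf_image, ENNReal.coe_sInf hTne]
  rw [hco, ENNReal.toNNReal_coe]
  exact hmem

lemma entryTime_shift {F : Type*} {φ : NNReal → F → F}
    (hφadd : ∀ s t : NNReal, ∀ x, φ (t + s) x = φ t (φ s x))
    {C : Set F} {x : F} {s : NNReal} (hs : (s : ENNReal) < entryTime φ C x) :
    entryTime φ C (φ s x) = entryTime φ C x - s := by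
  apply le_antisymm
  · -- ≤ : for any ε, since inf, take elements; use le_sInf? we need ≤ of sInf - s
    rw [(ENNReal.cancel_of_ne ENNReal.coe_ne_top).le_tsub_iff_right hs.le]
    apply le_sInf
    rintro a ⟨t, rfl, ht⟩
    have hts : s ≤ t := by
      have := entryTime_le ht
      exact_mod_cast le_of_lt (lt_of_lt_of_le hs this)
    have : φ ((t - s) + s) x ∈ C := by rwa [tsub_add_cancel_of_le hts]
    rw [hφadd] at this
    have h1 : entryTime φ C (φ s x) ≤ ((t - s : NNReal) : ENNReal) := entryTime_le this
    calc entryTime φ C (φ s x) + s ≤ ((t - s : NNReal) : ENNReal) + s := by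
          exact add_le_add h1 le_rfl
      _ = ((t - s + s : NNReal) : ENNReal) := by rw [ENNReal.coe_add]
      _ = (t : ENNReal) := by rw [tsub_add_cancel_of_le hts]
  · apply le_sInf
    rintro a ⟨u, rfl, hu⟩
    rw [← hφadd] at hu
    have := entryTime_le hu
    calc entryTime φ C x - s ≤ ((u + s : NNReal) : ENNReal) - s := by
          exact tsub_le_tsub_right this _
      _ = (u : ENNReal) := by
          rw [ENNReal.coe_add, ENNReal.add_sub_cancel_right ENNReal.coe_ne_top]

/-- for a flow `φ` on a topological space `F` and a closed set `C`, the flow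
stopped at the first entry time of `C` is again a flow in the algebraic sense:
`Φ_0(x) = x` and `Φ_{t+s}(x) = Φ_t(Φ_s(x))`. -/
theorem stoppedFlow_is_flow {F : Type*} [TopologicalSpace F]
    (φ : NNReal → F → F)
    (hφ0 : ∀ x, φ 0 x = x)
    (hφadd : ∀ s t : NNReal, ∀ x, φ (t + s) x = φ t (φ s x))
    (hφcont : Continuous fun p : NNReal × F => φ p.1 p.2)
    (C : Set F) (hC : IsClosed C) :
    (∀ x, stoppedFlow φ C 0 x = x) ∧
      (∀ s t : NNReal, ∀ x, stoppedFlow φ C (t + s) x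
        = stoppedFlow φ C t (stoppedFlow φ C s x)) := by
  constructor
  · intro x
    simp [stoppedFlow, hφ0]
  · intro s t x
    by_cases hcase : (s : ENNReal) < entryTime φ C x
    · -- s before entry time
      have hτs : entryTime φ C (φ s x) = entryTime φ C x - s := entryTime_shift hφadd hcase
      have hΦs : stoppedFlow φ C s x = φ s x := by
        rw [stoppedFlow, min_eq_left hcase.le, ENNReal.toNNReal_coe]
      rw [hΦs, stoppedFlow, stoppedFlow, hτs]
      rw [← hφadd]
      congr 1
      have key : min ((t : ENNReal) + s) (entryTime φ C x)
          = min (t : ENNReal) (entryTime φ C x - s) + s := by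
        rw [← min_add_add_right, tsub_add_cancel_of_le hcase.le]
      have hfin : min ((t : ENNReal) + s) (entryTime φ C x) ≠ ⊤ := by
        apply ne_top_of_le_ne_top _ (min_le_left _ _)
        exact ENNReal.add_ne_top.mpr ⟨ENNReal.coe_ne_top, ENNReal.coe_ne_top⟩
      have hfin2 : min (t : ENNReal) (entryTime φ C x - s) ≠ ⊤ :=
        ne_top_of_le_ne_top ENNReal.coe_ne_top (min_le_left _ _)
      rw [ENNReal.coe_add, key]
      rw [ENNReal.toNNReal_add hfin2 ENNReal.coe_ne_top, ENNReal.toNNReal_coe]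
    · -- s ≥ entry time
      push_neg at hcase
      have hfin : entryTime φ C x ≠ ⊤ := ne_top_of_le_ne_top ENNReal.coe_ne_top hcase
      have hmem : φ (entryTime φ C x).toNNReal x ∈ C := entryTime_mem hφcont hC hfin
      have hΦs : stoppedFlow φ C s x = φ (entryTime φ C x).toNNReal x := by
        rw [stoppedFlow, min_eq_right hcase]
      have hτ0 : entryTime φ C (stoppedFlow φ C s x) = 0 := by
        rw [hΦs]
        refine le_antisymm ?_ (zero_le)
        have : φ 0 (φ (entryTime φ C x).toNNReal x) ∈ C := by rwa [hφ0]
        simpa using entryTime_le this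
      have hΦts : stoppedFlow φ C (t + s) x = φ (entryTime φ C x).toNNReal x := by
        rw [stoppedFlow, min_eq_right]
        exact le_trans hcase (by exact_mod_cast le_add_self)
      rw [hΦts, stoppedFlow, hτ0]
      simp [hφ0, hΦs]
end
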